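/- For A(x) = |x|, let C be the Calderón commutator with kernel K(x,y) = (|x|−|y|)/(x−y)². For every c > 0 and the interval Q = (c/2, 3c/2), one has for a.e. x ∈ Q: C_Q 1(x) = p.v.∫_{2Q} (|x|−|y|)/(x−y)² dy + ∫_{R∖2Q} ( (|x|−|y|)/(x−y)² − (|c|−|y|)/(c−y)² ) dy = 2(log x − log c), where 2Q = (0, 2c). -/

import Mathlib

open MeasureTheory Filter Set

noncomputable section

namespace TL1

/-- An interval ("cube") in `ℝ` with center `c` and length `len > 0`. -/
structure ICube where
  c : ℝ
  len : ℝ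
  len_pos : 0 < len

namespace ICube

/-- The open interval `(c - ℓ/2, c + ℓ/2)`. -/
def set (Q : ICube) : Set ℝ := Set.Ioo (Q.c - Q.len / 2) (Q.c + Q.len / 2)

/-- The dilated interval `2Q = (c - ℓ, c + ℓ)`. -/
def double (Q : ICube) : ICube := ⟨Q.c, 2 * Q.len, mul_pos two_pos Q.len_pos⟩

end ICube

/-- The average `f_Q` of `f` over the interval `Q`. -/
def avg (Q : ICube) (f : ℝ → ℝ) : ℝ := (Q.len)⁻¹ * ∫ x in Q.set, f x

/-- The mean oscillation `‖f‖_Q = inf_b ℓ⁻¹ ∫_Q |f-b|`. -/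
def osc (Q : ICube) (f : ℝ → ℝ) : ℝ :=
  ⨅ b : ℝ, (Q.len)⁻¹ * ∫ x in Q.set, |f x - b|

/-- The fixed unit interval `Q₀` centered at the origin. -/
def Q0 : ICube := ⟨0, 1, one_pos⟩

/-- The `BMO` seminorm `sup_Q ‖f‖_Q`. -/
def bmoSeminorm (f : ℝ → ℝ) : ℝ := ⨆ Q : ICube, osc Q f

/-- Membership in `BMO(ℝ)`. -/
def MemBMO (f : ℝ → ℝ) : Prop :=
  LocallyIntegrable f volume ∧ BddAbove (Set.range fun Q : ICube => osc Q f)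

/-- The `BMO` norm `‖f‖*_BMO = ‖f‖_BMO + |f_{Q₀}|`. -/
def bmoNorm (f : ℝ → ℝ) : ℝ := bmoSeminorm f + |avg Q0 f|

/-- The length `ℓ̃` of the smallest interval `Q̃` containing `Q` and `Q₀`. -/
def tildeLen (Q : ICube) : ℝ :=
  max (Q.c + Q.len / 2) (1 / 2) - min (Q.c - Q.len / 2) (-(1 / 2))

/-- The log-distance function `L(Q) = log max(ℓ̃/ℓ, ℓ̃) + 1`. -/
def Lfun (Q : ICube) : ℝ := Real.log (max (tildeLen Q / Q.len) (tildeLen Q)) + 1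

/-- The `LMO` seminorm `sup_Q L(Q)·‖f‖_Q`. -/
def lmoSeminorm (f : ℝ → ℝ) : ℝ := ⨆ Q : ICube, Lfun Q * osc Q f

/-- Membership in `LMO(ℝ)`. -/
def MemLMO (f : ℝ → ℝ) : Prop :=
  LocallyIntegrable f volume ∧ BddAbove (Set.range fun Q : ICube => Lfun Q * osc Q f)

/-- The principal value `p.v.∫_S g(y) dy = lim_{ε→0⁺} ∫_{{y ∈ S : |y-x|>ε}} g(y) dy`,
where the singularity is at `x`. -/
def pv (S : Set ℝ) (x : ℝ) (g : ℝ → ℝ) : ℝ :=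
  limUnder (nhdsWithin (0 : ℝ) (Set.Ioi 0))
    (fun ε => ∫ y in S \ Metric.closedBall x ε, g y)

/-- The Calderón commutator kernel `K_A(x,y) = (A(x)-A(y))/(x-y)²`. -/
def KA (A : ℝ → ℝ) (x y : ℝ) : ℝ := (A x - A y) / (x - y) ^ 2

/-- The localized Calderón commutator
`C_{A,Q} g(x) = p.v.∫_{2Q} K_A(x,y)g(y)dy + ∫_{ℝ∖2Q}(K_A(x,y)-K_A(c,y))g(y)dy`. -/
def CAQ (A : ℝ → ℝ) (Q : ICube) (g : ℝ → ℝ) : ℝ → ℝ := fun x =>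
  pv Q.double.set x (fun y => KA A x y * g y)
    + ∫ y in (Q.double.set)ᶜ, (KA A x y - KA A Q.c y) * g y

/-- `C_{A,Q} 1`. -/
def CAQone (A : ℝ → ℝ) (Q : ICube) : ℝ → ℝ := CAQ A Q (fun _ => 1)

/-- For `f ∈ BMO`, `C_{A,Q} f = f_{2Q}·C_{A,Q}1 + C_{A,Q}(f - f_{2Q})`. -/
def CAQbmo (A : ℝ → ℝ) (Q : ICube) (f : ℝ → ℝ) : ℝ → ℝ := fun x =>
  avg Q.double f * CAQone A Q x + CAQ A Q (fun y => f y - avg Q.double f) x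

/-- The localized Hilbert transform
`H_Q g(x) = p.v.∫_{2Q} g(y)/(x-y) dy + ∫_{ℝ∖2Q}(1/(x-y)-1/(c-y))g(y)dy`. -/
def HQ (Q : ICube) (g : ℝ → ℝ) : ℝ → ℝ := fun x =>
  pv Q.double.set x (fun y => g y / (x - y))
    + ∫ y in (Q.double.set)ᶜ, (1 / (x - y) - 1 / (Q.c - y)) * g y

private lemma integrableOn_Iic_deriv {a l : ℝ} {g g' : ℝ → ℝ}
    (hderiv : ∀ x ∈ Set.Iic a, HasDerivAt g (g' x) x)
    (hsign : (∀ x ∈ Set.Iio a, 0 ≤ g' x) ∨ (∀ x ∈ Set.Iio a, g' x ≤ 0))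
    (hg : Tendsto g atBot (nhds l)) : IntegrableOn g' (Set.Iic a) := by
  have hdG : ∀ x ∈ Set.Ici (-a), HasDerivAt (fun x => g (-x)) (-g' (-x)) x := by
    intro x hx
    have hmem : -x ∈ Set.Iic a := by
      simp only [Set.mem_Ici] at hx
      simpa using neg_le.mp hx
    simpa [Function.comp_def] using HasDerivAt.scomp x (hderiv (-x) hmem) (hasDerivAt_neg' x)
  have hGtop : Tendsto (fun x => g (-x)) atTop (nhds l) := hg.comp tendsto_neg_atTop_atBot
  have key : IntegrableOn (fun x => -g' (-x)) (Set.Ioi (-a)) := by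
    rcases hsign with hpos | hneg
    · refine integrableOn_Ioi_deriv_of_nonpos' hdG (fun x hx => ?_) hGtop
      have hmem : -x ∈ Set.Iio a := by
        simp only [Set.mem_Ioi] at hx
        simpa using neg_lt.mp hx
      simpa using neg_nonpos.mpr (hpos _ hmem)
    · refine integrableOn_Ioi_deriv_of_nonneg' hdG (fun x hx => ?_) hGtop
      have hmem : -x ∈ Set.Iio a := by
        simp only [Set.mem_Ioi] at hx
        simpa using neg_lt.mp hx
      simpa using neg_nonneg.mpr (hneg _ hmem)
  have key2 : IntegrableOn (fun x => g' (-x)) (Set.Ioi (-a)) :=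
    key.neg.congr (ae_of_all _ fun x => by simp)
  have hpre : (Neg.neg : ℝ → ℝ) ⁻¹' Set.Iio a = Set.Ioi (-a) := by
    ext y; simp [neg_lt]
  have h3 : IntegrableOn (g' ∘ (Neg.neg : ℝ → ℝ)) ((Neg.neg : ℝ → ℝ) ⁻¹' Set.Iio a) := by
    rw [hpre]; exact key2
  have h4 : IntegrableOn g' (Set.Iio a) :=
    (MeasurePreserving.integrableOn_comp_preimage
      (Measure.measurePreserving_neg (volume : Measure ℝ))
      (Homeomorph.neg ℝ).measurableEmbedding).1 h3
  exact (integrableOn_Iic_iff_integrableOn_Iio (by simp)).2 h4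

private lemma tendsto_log_sub_log_atBot (b d : ℝ) :
    Tendsto (fun y => Real.log (b - y) - Real.log (d - y)) atBot (nhds 0) := by
  have h1 : Tendsto (fun y : ℝ => d - y) atBot atTop := by
    simpa [sub_eq_add_neg] using tendsto_atTop_add_const_left atBot d tendsto_neg_atBot_atTop
  have h2 : Tendsto (fun y => (b - d) / (d - y)) atBot (nhds 0) :=
    Tendsto.div_atTop tendsto_const_nhds h1
  have h3 : Tendsto (fun y => 1 + (b - d) / (d - y)) atBot (nhds 1) := by
    simpa using h2.const_add 1
  have h4 : Tendsto (fun y => Real.log (1 + (b - d) / (d - y))) atBot (nhds 0) := by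
    have := (Real.continuousAt_log one_ne_zero).tendsto.comp h3
    simpa [Function.comp_def] using this
  refine h4.congr' ?_
  filter_upwards [eventually_lt_atBot (min b d)] with y hy
  have hb : 0 < b - y := by have := min_le_left b d; linarith
  have hd : 0 < d - y := by have := min_le_right b d; linarith
  rw [show 1 + (b - d) / (d - y) = (b - y)/(d - y) by field_simp; ring,
    Real.log_div (ne_of_gt hb) (ne_of_gt hd)]

private lemma tendsto_log_sub_log_atTop (b d : ℝ) :
    Tendsto (fun y => Real.log (y - b) - Real.log (y - d)) atTop (nhds 0) := by
  have := (tendsto_log_sub_log_atBot (-b) (-d)).comp tendsto_neg_atTop_atBot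
  simpa [Function.comp_def, neg_sub_neg, sub_eq_neg_add, add_comm] using this

/-- For the Calderón commutator associated to `A(x) = |x|`, for every `c > 0` and the
interval `Q = (c/2, 3c/2)`, one has `C_Q 1(x) = 2(log x - log c)` for a.e. `x ∈ Q`. -/
theorem statement_18 (c : ℝ) (hc : 0 < c) :
    ∀ᵐ x ∂(volume : Measure ℝ), x ∈ (ICube.mk c c hc).set →
      CAQone (fun t => |t|) (ICube.mk c c hc) x = 2 * (Real.log x - Real.log c) := by
  refine Filter.Eventually.of_forall (fun x hx => ?_)
  obtain ⟨hx1, hx2⟩ := hx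
  have hx0 : 0 < x := by
    simp only [ICube.set] at hx1 ⊢
    linarith
  have hxne : x ≠ 0 := ne_of_gt hx0
  have hx2c : x < 2 * c := by
    simp only [ICube.set] at hx2 ⊢
    linarith
  have h2cx : 0 < 2 * c - x := by linarith
  -- kernel simplifications
  have hKpos : ∀ a y : ℝ, 0 < a → 0 ≤ y → KA (fun t => |t|) a y = (a - y)⁻¹ := by
    intro a y ha hy
    simp only [KA]
    rw [abs_of_pos ha, abs_of_nonneg hy, sq, div_self_mul_self']
  have hKneg : ∀ a y : ℝ, 0 < a → y ≤ 0 → KA (fun t => |t|) a y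
      = 2 * a / (a - y) ^ 2 - (a - y)⁻¹ := by
    intro a y ha hy
    have hne : a - y ≠ 0 := ne_of_gt (by linarith)
    simp only [KA]
    rw [abs_of_pos ha, abs_of_nonpos hy]
    field_simp
    ring
  -- the double cube
  have hset : (ICube.mk c c hc).double.set = Set.Ioo 0 (2 * c) := by
    simp only [ICube.double, ICube.set]
    rw [show c - 2 * c / 2 = 0 by ring, show c + 2 * c / 2 = 2 * c by ring]
  -- Part 1 : the principal value equals log x - log (2c - x)
  have hpv : pv (Set.Ioo 0 (2 * c)) x (fun y => KA (fun t => |t|) x y)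
      = Real.log x - Real.log (2 * c - x) := by
    unfold pv
    apply Filter.Tendsto.limUnder_eq
    refine Filter.Tendsto.congr' ?_ tendsto_const_nhds
    have hmin : (0:ℝ) < min x (2 * c - x) := lt_min hx0 h2cx
    filter_upwards [Ioo_mem_nhdsGT hmin] with ε hε
    obtain ⟨hε0, hεlt⟩ := hε
    have hεx : ε < x := lt_of_lt_of_le hεlt (min_le_left _ _)
    have hε2c : ε < 2 * c - x := lt_of_lt_of_le hεlt (min_le_right _ _)
    symm
    have hsetε : Set.Ioo 0 (2*c) \ Metric.closedBall x ε
        = Set.Ioo 0 (x - ε) ∪ Set.Ioo (x + ε) (2*c) := by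
      rw [Real.closedBall_eq_Icc]
      ext y
      simp only [Set.mem_diff, Set.mem_Ioo, Set.mem_Icc, Set.mem_union, not_and_or, not_le]
      constructor
      · rintro ⟨⟨h0, h2⟩, h | h⟩
        · exact Or.inl ⟨h0, h⟩
        · exact Or.inr ⟨h, h2⟩
      · rintro (⟨h0, h⟩ | ⟨h, h2⟩)
        · exact ⟨⟨h0, by linarith⟩, Or.inl h⟩
        · exact ⟨⟨by linarith, h2⟩, Or.inr h⟩
    rw [hsetε]
    have heq1 : Set.EqOn (fun y => KA (fun t => |t|) x y) (fun y => (x - y)⁻¹)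
        (Set.Ioo 0 (x - ε) ∪ Set.Ioo (x + ε) (2*c)) := by
      intro y hy
      rcases hy with hy | hy
      · exact hKpos x y hx0 (le_of_lt hy.1)
      · exact hKpos x y hx0 (by have := hy.1; linarith)
    rw [setIntegral_congr_fun (measurableSet_Ioo.union measurableSet_Ioo) heq1]
    have hi1 : IntegrableOn (fun y => (x - y)⁻¹) (Set.Ioo 0 (x - ε)) := by
      apply (ContinuousOn.integrableOn_Icc ?_).mono_set Set.Ioo_subset_Icc_self
      exact ContinuousOn.inv₀ (Continuous.continuousOn (by continuity))
        (fun y hy => ne_of_gt (by obtain ⟨h1, h2⟩ := hy; linarith))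
    have hi2 : IntegrableOn (fun y => (x - y)⁻¹) (Set.Ioo (x + ε) (2*c)) := by
      apply (ContinuousOn.integrableOn_Icc ?_).mono_set Set.Ioo_subset_Icc_self
      exact ContinuousOn.inv₀ (Continuous.continuousOn (by continuity))
        (fun y hy => ne_of_lt (by obtain ⟨h1, h2⟩ := hy; linarith))
    rw [setIntegral_union (by
        rw [Set.disjoint_left]
        intro y hy1 hy2
        exact absurd hy2.1 (not_lt.2 (by linarith [hy1.2])))
      measurableSet_Ioo hi1 hi2]
    have e1 : ∫ y in Set.Ioo 0 (x - ε), (x - y)⁻¹ = Real.log (x / ε) := by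
      have h := intervalIntegral.integral_comp_sub_left (a := 0) (b := x - ε)
        (fun u : ℝ => u⁻¹) x
      rw [show x - (x - ε) = ε by ring, sub_zero,
        integral_inv (Set.notMem_uIcc_of_lt hε0 hx0)] at h
      rw [← integral_Ioc_eq_integral_Ioo,
        ← intervalIntegral.integral_of_le (by linarith : (0:ℝ) ≤ x - ε)]
      exact h
    have e2 : ∫ y in Set.Ioo (x + ε) (2*c), (x - y)⁻¹ = Real.log (ε / (2*c - x)) := by
      have h := intervalIntegral.integral_comp_sub_left (a := x + ε) (b := 2*c)
        (fun u : ℝ => u⁻¹) x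
      rw [show x - (x + ε) = -ε by ring,
        integral_inv (Set.notMem_uIcc_of_gt (by linarith) (by linarith)),
        show -ε / (x - 2*c) = ε / (2*c - x) by
          rw [show x - 2*c = -(2*c - x) by ring, neg_div_neg_eq]] at h
      rw [← integral_Ioc_eq_integral_Ioo,
        ← intervalIntegral.integral_of_le (by linarith : x + ε ≤ 2*c)]
      exact h
    rw [e1, e2, Real.log_div hxne (ne_of_gt hε0), Real.log_div (ne_of_gt hε0) (ne_of_gt h2cx)]
    ring
  -- Part 2 : the complement integral
  have hxy_ne : ∀ y : ℝ, y ≤ 0 → x - y ≠ 0 := fun y hy => ne_of_gt (by linarith)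
  have hcy_ne : ∀ y : ℝ, y ≤ 0 → c - y ≠ 0 := fun y hy => ne_of_gt (by linarith)
  have hdInv : ∀ a y : ℝ, a - y ≠ 0 →
      HasDerivAt (fun y => 2 * a * (a - y)⁻¹) (2 * a / (a - y) ^ 2) y := by
    intro a y hne
    have h := HasDerivAt.const_mul (2 * a) (((hasDerivAt_id y).const_sub a).inv hne)
    simp only [id_eq, Pi.inv_apply] at h
    exact h.congr_deriv (by ring)
  have hdA : ∀ y ∈ Set.Iic (0:ℝ), HasDerivAt (fun y => 2 * x * (x - y)⁻¹)
      (2 * x / (x - y) ^ 2) y := fun y hy => hdInv x y (hxy_ne y hy)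
  have hdB : ∀ y ∈ Set.Iic (0:ℝ), HasDerivAt (fun y => 2 * c * (c - y)⁻¹)
      (2 * c / (c - y) ^ 2) y := fun y hy => hdInv c y (hcy_ne y hy)
  have hdD : ∀ y ∈ Set.Iic (0:ℝ), HasDerivAt (fun y => Real.log (c - y) - Real.log (x - y))
      ((x - y)⁻¹ - (c - y)⁻¹) y := by
    intro y hy
    have h1 : HasDerivAt (fun y => Real.log (c - y)) (-(c - y)⁻¹) y := by
      have := (Real.hasDerivAt_log (hcy_ne y hy)).comp y ((hasDerivAt_id y).const_sub c)
      simpa [Function.comp_def] using this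
    have h2 : HasDerivAt (fun y => Real.log (x - y)) (-(x - y)⁻¹) y := by
      have := (Real.hasDerivAt_log (hxy_ne y hy)).comp y ((hasDerivAt_id y).const_sub x)
      simpa [Function.comp_def] using this
    have heq : (x - y)⁻¹ - (c - y)⁻¹ = -(c - y)⁻¹ - -(x - y)⁻¹ := by ring
    rw [heq]
    exact h1.sub h2
  have hdF : ∀ y ∈ Set.Ici (2*c), HasDerivAt (fun y => Real.log (y - c) - Real.log (y - x))
      ((x - y)⁻¹ - (c - y)⁻¹) y := by
    intro y hy
    simp only [Set.mem_Ici] at hy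
    have hyc : (0:ℝ) < y - c := by linarith
    have hyx : (0:ℝ) < y - x := by linarith
    have h1 : HasDerivAt (fun y => Real.log (y - c)) ((y - c)⁻¹) y := by
      have := (Real.hasDerivAt_log (ne_of_gt hyc)).comp y ((hasDerivAt_id y).sub_const c)
      simpa [Function.comp_def] using this
    have h2 : HasDerivAt (fun y => Real.log (y - x)) ((y - x)⁻¹) y := by
      have := (Real.hasDerivAt_log (ne_of_gt hyx)).comp y ((hasDerivAt_id y).sub_const x)
      simpa [Function.comp_def] using this
    have heq : (x - y)⁻¹ - (c - y)⁻¹ = (y - c)⁻¹ - (y - x)⁻¹ := by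
      rw [show y - c = -(c - y) by ring, show y - x = -(x - y) by ring, inv_neg, inv_neg]
      ring
    rw [heq]
    exact h1.sub h2
  have hD_repr : ∀ y : ℝ, x - y ≠ 0 → c - y ≠ 0 →
      (x - y)⁻¹ - (c - y)⁻¹ = (c - x) / ((x - y) * (c - y)) := by
    intro y h1 h2
    field_simp
    ring
  have hDsign_neg : (∀ y ∈ Set.Iio (0:ℝ), 0 ≤ (x - y)⁻¹ - (c - y)⁻¹)
      ∨ (∀ y ∈ Set.Iio (0:ℝ), (x - y)⁻¹ - (c - y)⁻¹ ≤ 0) := by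
    rcases le_total x c with h | h
    · left
      intro y hy
      have hy' : y < 0 := hy
      rw [hD_repr y (hxy_ne y hy'.le) (hcy_ne y hy'.le)]
      exact div_nonneg (by linarith) (mul_pos (by linarith) (by linarith)).le
    · right
      intro y hy
      have hy' : y < 0 := hy
      rw [hD_repr y (hxy_ne y hy'.le) (hcy_ne y hy'.le)]
      exact div_nonpos_of_nonpos_of_nonneg (by linarith)
        (mul_pos (by linarith) (by linarith)).le
  have hDsign_pos : (∀ y ∈ Set.Ioi (2*c), 0 ≤ (x - y)⁻¹ - (c - y)⁻¹)
      ∨ (∀ y ∈ Set.Ioi (2*c), (x - y)⁻¹ - (c - y)⁻¹ ≤ 0) := by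
    rcases le_total x c with h | h
    · left
      intro y hy
      have hy' : 2*c < y := hy
      have hmul : 0 < (x - y) * (c - y) :=
        mul_pos_of_neg_of_neg (by linarith) (by linarith)
      rw [hD_repr y (by intro h'; nlinarith) (by intro h'; nlinarith)]
      exact div_nonneg (by linarith) hmul.le
    · right
      intro y hy
      have hy' : 2*c < y := hy
      have hmul : 0 < (x - y) * (c - y) :=
        mul_pos_of_neg_of_neg (by linarith) (by linarith)
      rw [hD_repr y (by intro h'; nlinarith) (by intro h'; nlinarith)]
      exact div_nonpos_of_nonpos_of_nonneg (by linarith) hmul.le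
  have hsub_top : ∀ a : ℝ, Tendsto (fun y : ℝ => a - y) atBot atTop := by
    intro a
    simpa [sub_eq_add_neg] using tendsto_atTop_add_const_left atBot a tendsto_neg_atBot_atTop
  have htInv : ∀ a : ℝ, Tendsto (fun y => 2 * a * (a - y)⁻¹) atBot (nhds 0) := by
    intro a
    simpa [div_eq_mul_inv] using
      Tendsto.div_atTop (tendsto_const_nhds (x := 2 * a) (f := atBot)) (hsub_top a)
  have htD : Tendsto (fun y => Real.log (c - y) - Real.log (x - y)) atBot (nhds 0) :=
    tendsto_log_sub_log_atBot c x
  have htF : Tendsto (fun y => Real.log (y - c) - Real.log (y - x)) atTop (nhds 0) :=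
    tendsto_log_sub_log_atTop c x
  have hiA : IntegrableOn (fun y => 2 * x / (x - y) ^ 2) (Set.Iic 0) :=
    integrableOn_Iic_deriv hdA
      (Or.inl fun y _ => div_nonneg (by linarith) (sq_nonneg _)) (htInv x)
  have hiB : IntegrableOn (fun y => 2 * c / (c - y) ^ 2) (Set.Iic 0) :=
    integrableOn_Iic_deriv hdB
      (Or.inl fun y _ => div_nonneg (by linarith) (sq_nonneg _)) (htInv c)
  have hiD : IntegrableOn (fun y => (x - y)⁻¹ - (c - y)⁻¹) (Set.Iic 0) :=
    integrableOn_Iic_deriv hdD hDsign_neg htD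
  have hIoiD : IntegrableOn (fun y => (x - y)⁻¹ - (c - y)⁻¹) (Set.Ioi (2*c)) := by
    rcases hDsign_pos with hp | hp
    · exact integrableOn_Ioi_deriv_of_nonneg' hdF hp htF
    · exact integrableOn_Ioi_deriv_of_nonpos' hdF hp htF
  have hvA : ∫ y in Set.Iic (0:ℝ), 2 * x / (x - y) ^ 2 = 2 := by
    rw [integral_Iic_of_hasDerivAt_of_tendsto' hdA hiA (htInv x)]
    field_simp
    ring
  have hvB : ∫ y in Set.Iic (0:ℝ), 2 * c / (c - y) ^ 2 = 2 := by
    rw [integral_Iic_of_hasDerivAt_of_tendsto' hdB hiB (htInv c)]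
    field_simp
    rw [sub_zero, sub_zero, mul_div_assoc, div_self hc.ne', mul_one]
  have hvD : ∫ y in Set.Iic (0:ℝ), ((x - y)⁻¹ - (c - y)⁻¹) = Real.log c - Real.log x := by
    rw [integral_Iic_of_hasDerivAt_of_tendsto' hdD hiD htD]
    simp
  have hvF : ∫ y in Set.Ioi (2*c), ((x - y)⁻¹ - (c - y)⁻¹)
      = Real.log (2*c - x) - Real.log c := by
    rw [integral_Ioi_of_hasDerivAt_of_tendsto' hdF hIoiD htF,
      show 2*c - c = c by ring]
    ring
  have hcompl : (Set.Ioo (0:ℝ) (2*c))ᶜ = Set.Iic 0 ∪ Set.Ici (2*c) := by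
    ext y
    simp only [Set.mem_compl_iff, Set.mem_Ioo, not_and_or, not_lt, Set.mem_union,
      Set.mem_Iic, Set.mem_Ici]
  have hEqIic : Set.EqOn (fun y => KA (fun t => |t|) x y - KA (fun t => |t|) c y)
      (fun y => 2 * x / (x - y) ^ 2 - 2 * c / (c - y) ^ 2 - ((x - y)⁻¹ - (c - y)⁻¹))
      (Set.Iic 0) := by
    intro y hy
    simp only
    rw [hKneg x y hx0 hy, hKneg c y hc hy]
    ring
  have hEqIci : Set.EqOn (fun y => KA (fun t => |t|) x y - KA (fun t => |t|) c y)
      (fun y => (x - y)⁻¹ - (c - y)⁻¹) (Set.Ici (2*c)) := by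
    intro y hy
    have hy0 : (0:ℝ) ≤ y := le_trans (by linarith) hy
    simp only
    rw [hKpos x y hx0 hy0, hKpos c y hc hy0]
  have hiAB : IntegrableOn (fun y => 2 * x / (x - y) ^ 2 - 2 * c / (c - y) ^ 2)
      (Set.Iic 0) := hiA.sub hiB
  have hiABD : IntegrableOn
      (fun y => 2 * x / (x - y) ^ 2 - 2 * c / (c - y) ^ 2 - ((x - y)⁻¹ - (c - y)⁻¹))
      (Set.Iic 0) := hiAB.sub hiD
  have hIntIic : IntegrableOn (fun y => KA (fun t => |t|) x y - KA (fun t => |t|) c y)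
      (Set.Iic 0) :=
    IntegrableOn.congr_fun hiABD hEqIic.symm measurableSet_Iic
  have hIntIci : IntegrableOn (fun y => KA (fun t => |t|) x y - KA (fun t => |t|) c y)
      (Set.Ici (2*c)) :=
    IntegrableOn.congr_fun ((integrableOn_Ici_iff_integrableOn_Ioi (by simp)).2 hIoiD)
      hEqIci.symm measurableSet_Ici
  have hvIic : ∫ y in Set.Iic (0:ℝ), (KA (fun t => |t|) x y - KA (fun t => |t|) c y)
      = Real.log x - Real.log c := by
    rw [setIntegral_congr_fun measurableSet_Iic hEqIic,
      integral_sub hiAB hiD, integral_sub hiA hiB, hvA, hvB, hvD]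
    ring
  have hvIci : ∫ y in Set.Ici (2*c), (KA (fun t => |t|) x y - KA (fun t => |t|) c y)
      = Real.log (2*c - x) - Real.log c := by
    rw [setIntegral_congr_fun measurableSet_Ici hEqIci, integral_Ici_eq_integral_Ioi, hvF]
  -- assemble
  simp only [CAQone, CAQ, mul_one, hset]
  rw [hpv, hcompl,
    setIntegral_union (Set.Iic_disjoint_Ici.2 (not_le.2 (by linarith)))
      measurableSet_Ici hIntIic hIntIci,
    hvIic, hvIci]
  ring

end TL1
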